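/- The softmax function with scaling factor λ > 0 is (1/λ)-Lipschitz: for all vectors x, y in ℝⁿ, ‖φ(x/λ) − φ(y/λ)‖ ≤ (1/λ)‖x − y‖, where φ is the softmax map with components [φ(v)]_i = exp(v_i)/∑_j exp(v_j) and ‖·‖ is the Euclidean norm. -/

import Mathlib

noncomputable def softmax {n : ℕ} (v : EuclideanSpace ℝ (Fin n)) :
    EuclideanSpace ℝ (Fin n) :=
  WithLp.toLp 2 (fun i => Real.exp (v i) / ∑ j, Real.exp (v j))

namespace SoftmaxAux

variable {n : ℕ}

abbrev E (n : ℕ) := EuclideanSpace ℝ (Fin n)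

noncomputable def S (v : E n) : ℝ := ∑ j, Real.exp (v j)

lemma S_pos {n : ℕ} (v : E n) (hn : 0 < n) : 0 < S v := by
  apply Finset.sum_pos (fun j _ => Real.exp_pos _)
  simpa using Finset.univ_nonempty_iff.2 (Fin.pos_iff_nonempty.mp hn)

noncomputable def smD (v : E n) : E n →L[ℝ] E n :=
  LinearMap.toContinuousLinearMap
  { toFun := fun u => (WithLp.toLp 2 (fun i => softmax v i * (u i - ∑ j, softmax v j * u j)) : E n)
    map_add' := by
      intro u w
      ext i
      simp only [PiLp.toLp_apply, PiLp.add_apply, mul_add, Finset.sum_add_distrib]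
      ring
    map_smul' := by
      intro c u
      ext i
      simp only [PiLp.toLp_apply, PiLp.smul_apply, smul_eq_mul, RingHom.id_apply]
      have h : ∀ j : Fin n, softmax v j * (c * u j) = c * (softmax v j * u j) := fun j => by ring
      simp only [h, ← Finset.mul_sum]
      ring }

lemma smD_apply (v u : E n) (i : Fin n) :
    smD v u i = softmax v i * (u i - ∑ j, softmax v j * u j) := rfl

lemma hasFDerivAt_softmax (hn : 0 < n) (v : E n) :
    HasFDerivAt softmax (smD v) v := by
  have hS : 0 < S v := S_pos v hn
  have h1 : ∀ i : Fin n, HasFDerivAt (fun w : E n => w i) (PiLp.proj (𝕜 := ℝ) 2 (fun _ : Fin n => ℝ) i) v :=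
    fun i => PiLp.hasFDerivAt_apply (𝕜 := ℝ) 2 v i
  have hexp : ∀ i : Fin n, HasFDerivAt (fun w : E n => Real.exp (w i))
      (Real.exp (v i) • PiLp.proj (𝕜 := ℝ) 2 (fun _ : Fin n => ℝ) i) v :=
    fun i => by exact (Real.hasDerivAt_exp (v i)).comp_hasFDerivAt v (h1 i)
  have hSder : HasFDerivAt (fun w : E n => S w)
      (∑ j, Real.exp (v j) • PiLp.proj (𝕜 := ℝ) 2 (fun _ : Fin n => ℝ) j) v :=
    by simpa only [S] using HasFDerivAt.fun_sum (u := Finset.univ) (fun j _ => hexp j)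
  have hinv : HasFDerivAt (fun w : E n => (S w)⁻¹)
      ((-(S v ^ 2)⁻¹) • ∑ j, Real.exp (v j) • PiLp.proj (𝕜 := ℝ) 2 (fun _ : Fin n => ℝ) j) v :=
    (hasDerivAt_inv hS.ne').comp_hasFDerivAt v hSder
  have hmul : ∀ i : Fin n, HasFDerivAt (fun w : E n => Real.exp (w i) * (S w)⁻¹)
      (Real.exp (v i) • ((-(S v ^ 2)⁻¹) • ∑ j, Real.exp (v j) • PiLp.proj (𝕜 := ℝ) 2 (fun _ : Fin n => ℝ) j)
        + (S v)⁻¹ • (Real.exp (v i) • PiLp.proj (𝕜 := ℝ) 2 (fun _ : Fin n => ℝ) i)) v :=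
    fun i => (hexp i).mul hinv
  rw [← hasFDerivWithinAt_univ, hasFDerivWithinAt_piLp]
  intro i
  have hfun : (fun w : E n => softmax w i) = fun w => Real.exp (w i) * (S w)⁻¹ := by
    funext w
    simp [softmax, S, div_eq_mul_inv]
  rw [hfun]
  have hCLM : (PiLp.proj (𝕜 := ℝ) 2 (fun _ : Fin n => ℝ) i ∘L smD v)
      = Real.exp (v i) • ((-(S v ^ 2)⁻¹) • ∑ j, Real.exp (v j) • PiLp.proj (𝕜 := ℝ) 2 (fun _ : Fin n => ℝ) j)
        + (S v)⁻¹ • (Real.exp (v i) • PiLp.proj (𝕜 := ℝ) 2 (fun _ : Fin n => ℝ) i) := by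
    ext u
    simp only [ContinuousLinearMap.comp_apply, ContinuousLinearMap.add_apply,
      ContinuousLinearMap.smul_apply, ContinuousLinearMap.sum_apply, PiLp.proj_apply,
      smul_eq_mul, Finset.mul_sum]
    rw [smD_apply]
    have hsum : ∑ j, softmax v j * u j = (S v)⁻¹ * ∑ j, Real.exp (v j) * u j := by
      rw [Finset.mul_sum]
      refine Finset.sum_congr rfl fun j _ => ?_
      simp [softmax, S, div_eq_mul_inv]
      ring
    rw [hsum]
    have hsm : softmax v i = Real.exp (v i) / S v := rfl
    rw [hsm]
    have hfac : ∀ j : Fin n, Real.exp (v i) * (-(S v ^ 2)⁻¹ * (Real.exp (v j) * u j))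
        = (-(Real.exp (v i) * (S v ^ 2)⁻¹)) * (Real.exp (v j) * u j) := fun j => by ring
    simp only [hfac, ← Finset.mul_sum]
    field_simp
    ring
  rw [hCLM]
  exact (hmul i).hasFDerivWithinAt

lemma softmax_nonneg (v : E n) (i : Fin n) : 0 ≤ softmax v i :=
  div_nonneg (Real.exp_pos _).le (Finset.sum_nonneg fun j _ => (Real.exp_pos _).le)

lemma softmax_sum (hn : 0 < n) (v : E n) : ∑ i, softmax v i = 1 := by
  have hS : 0 < S v := S_pos v hn
  have h : ∑ i, softmax v i = (∑ i, Real.exp (v i)) / S v := by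
    rw [Finset.sum_div]
    rfl
  rw [h]
  exact div_self hS.ne'

lemma softmax_le_one (hn : 0 < n) (v : E n) (i : Fin n) : softmax v i ≤ 1 := by
  have h := softmax_sum hn v
  have := Finset.single_le_sum (f := fun j => softmax v j)
    (fun j _ => softmax_nonneg v j) (Finset.mem_univ i)
  linarith

lemma smD_norm_le (hn : 0 < n) (v : E n) : ‖smD v‖ ≤ 1 := by
  refine ContinuousLinearMap.opNorm_le_bound _ zero_le_one fun u => ?_
  rw [one_mul, EuclideanSpace.norm_eq, EuclideanSpace.norm_eq]
  apply Real.sqrt_le_sqrt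
  set m := ∑ j, softmax v j * u j with hm
  have h0 : ∀ i, ‖smD v u i‖ ^ 2 = (softmax v i * (u i - m)) ^ 2 := by
    intro i
    rw [smD_apply, Real.norm_eq_abs, sq_abs]
  rw [Finset.sum_congr rfl fun i _ => h0 i]
  have h1 : ∑ i, (softmax v i * (u i - m)) ^ 2 ≤ ∑ i, softmax v i * (u i - m) ^ 2 := by
    refine Finset.sum_le_sum fun i _ => ?_
    have hp0 := softmax_nonneg v i
    have hp1 := softmax_le_one hn v i
    rw [mul_pow]
    have hsq : softmax v i ^ 2 ≤ softmax v i := by nlinarith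
    exact mul_le_mul_of_nonneg_right hsq (sq_nonneg _)
  have h2 : ∑ i, softmax v i * (u i - m) ^ 2 = (∑ i, softmax v i * u i ^ 2) - m ^ 2 := by
    have hexp : ∀ i : Fin n, softmax v i * (u i - m) ^ 2
        = softmax v i * u i ^ 2 - 2 * m * (softmax v i * u i) + m ^ 2 * softmax v i :=
      fun i => by ring
    rw [Finset.sum_congr rfl fun i _ => hexp i]
    rw [Finset.sum_add_distrib, Finset.sum_sub_distrib, ← Finset.mul_sum, ← Finset.mul_sum,
      ← hm, softmax_sum hn v]
    ring
  have h3 : (∑ i, softmax v i * u i ^ 2) ≤ ∑ i, ‖u i‖ ^ 2 := by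
    refine Finset.sum_le_sum fun i _ => ?_
    rw [Real.norm_eq_abs, sq_abs]
    have hp1 := softmax_le_one hn v i
    nlinarith [sq_nonneg (u i), softmax_nonneg v i]
  nlinarith [sq_nonneg m]

end SoftmaxAux

theorem softmax_lipschitz {n : ℕ} (lam : ℝ) (hlam : 0 < lam)
    (x y : EuclideanSpace ℝ (Fin n)) :
    ‖softmax (lam⁻¹ • x) - softmax (lam⁻¹ • y)‖ ≤ (1 / lam) * ‖x - y‖ := by
  rcases Nat.eq_zero_or_pos n with h0 | hn
  · subst h0
    have hz : ‖softmax (lam⁻¹ • x) - softmax (lam⁻¹ • y)‖ = 0 := by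
      simp [EuclideanSpace.norm_eq]
    rw [hz]
    positivity
  · have key := (convex_univ : Convex ℝ (Set.univ : Set (SoftmaxAux.E n))).norm_image_sub_le_of_norm_hasFDerivWithin_le
      (f := softmax) (f' := fun v => SoftmaxAux.smD v)
      (fun v _ => (SoftmaxAux.hasFDerivAt_softmax hn v).hasFDerivWithinAt)
      (fun v _ => SoftmaxAux.smD_norm_le hn v)
      (Set.mem_univ (lam⁻¹ • y)) (Set.mem_univ (lam⁻¹ • x))
    have hnorm : ‖lam⁻¹ • x - lam⁻¹ • y‖ = lam⁻¹ * ‖x - y‖ := by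
      rw [← smul_sub, norm_smul, Real.norm_eq_abs, abs_of_pos (inv_pos.2 hlam)]
    rw [one_mul, hnorm] at key
    rw [one_div]
    exact key
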